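/- Suppose D(t) ∈ ℝ^{n×n} is measurable locally bounded with D(t)e = 0 for all t, and its reduced matrix D̂(t) satisfies limsup_{t→∞} t⁻¹ ∫₀ᵗ sup_{|y|=1} yᵀ D̂(u) y du < 0. Then the time-dependent consensus protocol ẋ = D(t)x is convergent: every solution satisfies x_i(t) - x_j(t) → 0 as t → ∞ for all i, j. -/

import Mathlib

open Matrix Filter
open MeasureTheory

/-- The Moore–Penrose pseudo-inverse of a full-row-rank matrix: `S⁺ = Sᵀ(SSᵀ)⁻¹`. -/
noncomputable def moorePenrose {k n : ℕ} (S : Matrix (Fin k) (Fin n) ℝ) :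
    Matrix (Fin n) (Fin k) ℝ :=
  Sᵀ * (S * Sᵀ)⁻¹

lemma moorePenrose_right_inv {k n : ℕ} (S : Matrix (Fin k) (Fin n) ℝ)
    (h : S.rank = k) : S * moorePenrose S = 1 := by
  have hker : ∀ v : Fin k → ℝ, Sᵀ.mulVec v = 0 → v = 0 := by
    have hrankT : Sᵀ.rank = k := by rw [Matrix.rank_transpose]; exact h
    intro v hv
    have h1 := LinearMap.finrank_range_add_finrank_ker (Sᵀ.mulVecLin)
    rw [Module.finrank_pi ℝ, Fintype.card_fin] at h1
    have h2 : Module.finrank ℝ (LinearMap.range Sᵀ.mulVecLin) = k := hrankT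
    have h3 : Module.finrank ℝ (LinearMap.ker Sᵀ.mulVecLin) = 0 := by omega
    have h4 : LinearMap.ker Sᵀ.mulVecLin = ⊥ :=
      Submodule.finrank_eq_zero.mp h3
    have : v ∈ LinearMap.ker Sᵀ.mulVecLin := by
      rw [LinearMap.mem_ker]; exact hv
    rw [h4] at this
    simpa using this
  have hdet : IsUnit (S * Sᵀ).det := by
    rw [isUnit_iff_ne_zero]
    intro hd
    obtain ⟨v, hv0, hv⟩ := (Matrix.exists_mulVec_eq_zero_iff).mpr hd
    have hw : Sᵀ.mulVec v ⬝ᵥ Sᵀ.mulVec v = 0 := by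
      have : v ⬝ᵥ (S * Sᵀ).mulVec v = 0 := by rw [hv]; simp
      rw [← Matrix.mulVec_mulVec, Matrix.dotProduct_mulVec,
        ← Matrix.mulVec_transpose] at this
      exact this
    exact hv0 (hker v (dotProduct_self_eq_zero.mp hw))
  rw [moorePenrose, ← Matrix.mul_assoc]
  exact Matrix.mul_nonsing_inv _ hdet


lemma prod_le_dot {m : ℕ} (y : Fin m → ℝ) (a b : Fin m) :
    |y a * y b| ≤ y ⬝ᵥ y := by
  have hsum : ∀ c : Fin m, y c ^ 2 ≤ y ⬝ᵥ y := by
    intro c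
    have := Finset.single_le_sum (f := fun i => y i * y i)
      (fun i _ => mul_self_nonneg (y i)) (Finset.mem_univ c)
    simpa [dotProduct, sq] using this
  have h2 : |y a * y b| ≤ (y a ^ 2 + y b ^ 2) / 2 := by
    rw [abs_mul]
    nlinarith [sq_abs (y a), sq_abs (y b), sq_nonneg (|y a| - |y b|)]
  nlinarith [hsum a, hsum b]

lemma quad_bound {m : ℕ} (A : Matrix (Fin m) (Fin m) ℝ) (K : ℝ) (hK : 0 ≤ K)
    (hA : ∀ a b, |A a b| ≤ K) (y : Fin m → ℝ) :
    |y ⬝ᵥ A.mulVec y| ≤ (m * m) * K * (y ⬝ᵥ y) := by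
  have hy : 0 ≤ y ⬝ᵥ y := Finset.sum_nonneg fun i _ => mul_self_nonneg (y i)
  have h1 : y ⬝ᵥ A.mulVec y = ∑ a, ∑ b, y a * (A a b * y b) := by
    simp [dotProduct, Matrix.mulVec, Finset.mul_sum]
  rw [h1]
  calc |∑ a, ∑ b, y a * (A a b * y b)| ≤ ∑ a, |∑ b, y a * (A a b * y b)| :=
        Finset.abs_sum_le_sum_abs _ _
    _ ≤ ∑ a : Fin m, ∑ b : Fin m, |y a * (A a b * y b)| :=
        Finset.sum_le_sum fun a _ => Finset.abs_sum_le_sum_abs _ _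
    _ ≤ ∑ a : Fin m, ∑ b : Fin m, K * (y ⬝ᵥ y) := by
        refine Finset.sum_le_sum fun a _ => Finset.sum_le_sum fun b _ => ?_
        have : |y a * (A a b * y b)| = |A a b| * |y a * y b| := by
          rw [← abs_mul]; ring_nf
        rw [this]
        exact mul_le_mul (hA a b) (prod_le_dot y a b) (abs_nonneg _) hK
    _ = (m * m) * K * (y ⬝ᵥ y) := by
        simp [Finset.sum_const]; ring

lemma intervalIntegrable_of_bound (f : ℝ → ℝ) (a b C : ℝ) (hm : Measurable f)
    (h : ∀ s ∈ Set.uIcc a b, |f s| ≤ C) : IntervalIntegrable f volume a b := by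
  rw [intervalIntegrable_iff]
  refine ⟨hm.aestronglyMeasurable, ?_⟩
  haveI : IsFiniteMeasure (volume.restrict (Set.uIoc a b)) := by
    constructor
    rw [MeasureTheory.Measure.restrict_apply_univ, Set.uIoc]
    exact measure_Ioc_lt_top
  apply MeasureTheory.HasFiniteIntegral.of_bounded (C := C)
  filter_upwards [MeasureTheory.ae_restrict_mem measurableSet_uIoc] with s hs
  exact h s (Set.uIoc_subset_uIcc hs)


set_option maxHeartbeats 1600000 in
/-- If the measurable, locally bounded coupling matrix `D(t)` satisfies
`D(t)e = 0` and is asymptotically dissipative, i.e.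
`limsup_{t→∞} t⁻¹∫₀ᵗ sup_{|y|=1} yᵀ D̂(u) y du < 0` where `D̂(t) = S̃ D(t) S̃⁺`,
then the CP `ẋ = D(t)x` is convergent: every solution satisfies
`x_i(t) - x_j(t) → 0` for all `i, j`. -/
theorem asymptotically_dissipative_convergence {n : ℕ} (hn : 1 ≤ n)
    (D : ℝ → Matrix (Fin n) (Fin n) ℝ)
    (St : Matrix (Fin (n - 1)) (Fin n) ℝ)
    (hmeas : ∀ i j, Measurable fun t => D t i j)
    (hloc : ∀ T > (0 : ℝ), ∃ M : ℝ, ∀ t ∈ Set.Icc 0 T, ∀ i j, |D t i j| ≤ M)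
    (hDe : ∀ t, (D t).mulVec (fun _ => 1) = 0)
    (hrank : St.rank = n - 1)
    (hkerSt : ∀ v : Fin n → ℝ, St.mulVec v = 0 ↔ ∃ c : ℝ, v = fun _ => c)
    (γ : ℝ → ℝ)
    (hγ : ∀ t, IsLUB {r : ℝ | ∃ y : Fin (n - 1) → ℝ, y ⬝ᵥ y = 1 ∧
      r = y ⬝ᵥ (St * D t * moorePenrose St).mulVec y} (γ t))
    (hdiss : limsup (fun t : ℝ => t⁻¹ * ∫ u in (0:ℝ)..t, γ u) atTop < 0) :
    ∀ x : ℝ → (Fin n → ℝ), (∀ t, HasDerivAt x ((D t).mulVec (x t)) t) →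
      ∀ i j : Fin n, Tendsto (fun t => x t i - x t j) atTop (nhds 0) := by
  intro x hx i j
  rcases eq_or_ne i j with rfl | hij
  · simpa using tendsto_const_nhds
  have hn2 : 1 < n := by
    by_contra h
    have : n = 1 := by omega
    subst this
    exact hij (Subsingleton.elim i j)
  have hm1 : 1 ≤ n - 1 := by omega
  set P := moorePenrose St with hPdef
  have hSP : St * P = 1 := moorePenrose_right_inv St hrank
  set Dh : ℝ → Matrix (Fin (n-1)) (Fin (n-1)) ℝ := fun t => St * D t * P with hDhdef
  set z : ℝ → Fin (n-1) → ℝ := fun t => St.mulVec (x t) with hzdef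
  set W : ℝ → ℝ := fun t => z t ⬝ᵥ z t with hWdef
  -- basic facts
  have hWnn : ∀ t, 0 ≤ W t := fun t => Finset.sum_nonneg fun a _ => mul_self_nonneg _
  have hdecomp : ∀ v : Fin n → ℝ, ∃ c : ℝ,
      v = P.mulVec (St.mulVec v) + (fun _ => c) := by
    intro v
    have h0 : St.mulVec (v - P.mulVec (St.mulVec v)) = 0 := by
      rw [Matrix.mulVec_sub, Matrix.mulVec_mulVec, hSP, Matrix.one_mulVec, sub_self]
    obtain ⟨c, hc⟩ := (hkerSt _).mp h0
    refine ⟨c, ?_⟩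
    rw [← hc]
    abel
  have hDfact : ∀ t (v : Fin n → ℝ),
      (D t).mulVec v = (D t).mulVec (P.mulVec (St.mulVec v)) := by
    intro t v
    obtain ⟨c, hc⟩ := hdecomp v
    conv_lhs => rw [hc]
    rw [Matrix.mulVec_add]
    have h1 : (fun _ : Fin n => c) = c • (fun _ : Fin n => (1:ℝ)) := by
      funext a; simp
    have h2 : (D t).mulVec (fun _ => c) = 0 := by
      rw [h1, Matrix.mulVec_smul, hDe, smul_zero]
    rw [h2, add_zero]
  -- derivative of z
  have hz' : ∀ t (a : Fin (n-1)),
      HasDerivAt (fun s => z s a) ((Dh t).mulVec (z t) a) t := by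
    intro t a
    have h2 : St.mulVec ((D t).mulVec (x t)) = (Dh t).mulVec (z t) := by
      rw [hDfact t (x t)]
      rw [Matrix.mulVec_mulVec, Matrix.mulVec_mulVec]
    have h1 : HasDerivAt (fun s => z s a) (St.mulVec ((D t).mulVec (x t)) a) t := by
      have hre : (fun s => z s a) = fun s => ∑ k, St a k * x s k := by
        funext s; simp [hzdef, Matrix.mulVec, dotProduct]
      have hre2 : St.mulVec ((D t).mulVec (x t)) a
          = ∑ k, St a k * ((D t).mulVec (x t) k) := by
        simp [Matrix.mulVec, dotProduct]
      rw [hre, hre2]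
      exact HasDerivAt.fun_sum fun k _ =>
        ((hasDerivAt_pi.1 (hx t) k).const_mul (St a k))
    rw [← h2]
    exact h1
  have hzc : ∀ a, Continuous fun t => z t a :=
    fun a => continuous_iff_continuousAt.mpr fun t => (hz' t a).continuousAt
  -- derivative of W
  have hW' : ∀ t, HasDerivAt W (2 * (z t ⬝ᵥ (Dh t).mulVec (z t))) t := by
    intro t
    have h1 : HasDerivAt (fun s => ∑ a, z s a * z s a)
        (∑ a, ((Dh t).mulVec (z t) a * z t a + z t a * (Dh t).mulVec (z t) a)) t :=
      HasDerivAt.fun_sum fun a _ => (hz' t a).mul (hz' t a)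
    have h2 : W = fun s => ∑ a, z s a * z s a := by
      funext s; simp [hWdef, dotProduct]
    have h3 : 2 * (z t ⬝ᵥ (Dh t).mulVec (z t))
        = ∑ a, ((Dh t).mulVec (z t) a * z t a + z t a * (Dh t).mulVec (z t) a) := by
      rw [dotProduct, Finset.mul_sum]
      exact Finset.sum_congr rfl fun a _ => by ring
    rw [h2, h3]
    exact h1
  have hWc : Continuous W :=
    continuous_iff_continuousAt.mpr fun t => (hW' t).continuousAt
  -- measurability of Dh entries
  have hDhmeas : ∀ a b, Measurable fun t => Dh t a b := by
    intro a b
    have hre : (fun t => Dh t a b) = fun t => ∑ l, (∑ k, St a k * D t k l) * P l b := by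
      funext t; simp [hDhdef, Matrix.mul_apply]
    rw [hre]
    exact Finset.measurable_sum _ fun l _ =>
      ((Finset.measurable_sum _ fun k _ => ((hmeas k l).const_mul _)).mul_const _)
  -- local bound on Dh entries
  have hDhloc : ∀ T > (0:ℝ), ∃ K, 0 ≤ K ∧
      ∀ t ∈ Set.Icc (0:ℝ) T, ∀ a b, |Dh t a b| ≤ K := by
    intro T hT
    obtain ⟨M, hM⟩ := hloc T hT
    have hM0 : 0 ≤ M := le_trans (abs_nonneg _) (hM 0 ⟨le_refl 0, hT.le⟩ i i)
    set CS : ℝ := ∑ a' : Fin (n-1), ∑ k : Fin n, |St a' k| with hCS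
    set CP : ℝ := ∑ l : Fin n, ∑ b' : Fin (n-1), |P l b'| with hCP
    have hCS0 : 0 ≤ CS := Finset.sum_nonneg fun _ _ =>
      Finset.sum_nonneg fun _ _ => abs_nonneg _
    have hCP0 : 0 ≤ CP := Finset.sum_nonneg fun _ _ =>
      Finset.sum_nonneg fun _ _ => abs_nonneg _
    have hSTb : ∀ a k, |St a k| ≤ CS := by
      intro a k
      calc |St a k| ≤ ∑ k', |St a k'| :=
            Finset.single_le_sum (f := fun k' => |St a k'|)
              (fun k' _ => abs_nonneg _) (Finset.mem_univ k)
        _ ≤ CS := Finset.single_le_sum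
            (f := fun a' => ∑ k', |St a' k'|)
            (fun a' _ => Finset.sum_nonneg fun _ _ => abs_nonneg _) (Finset.mem_univ a)
    have hPb : ∀ l b, |P l b| ≤ CP := by
      intro l b
      calc |P l b| ≤ ∑ b', |P l b'| :=
            Finset.single_le_sum (f := fun b' => |P l b'|)
              (fun b' _ => abs_nonneg _) (Finset.mem_univ b)
        _ ≤ CP := Finset.single_le_sum
            (f := fun l' => ∑ b', |P l' b'|)
            (fun l' _ => Finset.sum_nonneg fun _ _ => abs_nonneg _) (Finset.mem_univ l)
    refine ⟨(n : ℝ) * ((n : ℝ) * (CS * M * CP)), by positivity, ?_⟩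
    intro t ht a b
    have hre : Dh t a b = ∑ l, ∑ k, St a k * D t k l * P l b := by
      simp [hDhdef, Matrix.mul_apply, Finset.sum_mul]
    rw [hre]
    calc |∑ l, ∑ k, St a k * D t k l * P l b|
        ≤ ∑ l, |∑ k, St a k * D t k l * P l b| := Finset.abs_sum_le_sum_abs _ _
      _ ≤ ∑ l : Fin n, ∑ k : Fin n, |St a k * D t k l * P l b| :=
          Finset.sum_le_sum fun l _ => Finset.abs_sum_le_sum_abs _ _
      _ ≤ ∑ l : Fin n, ∑ k : Fin n, CS * M * CP := by
          refine Finset.sum_le_sum fun l _ => Finset.sum_le_sum fun k _ => ?_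
          rw [abs_mul, abs_mul]
          have h1 := hM t ht k l
          have h2 := hSTb a k
          have h3 := hPb l b
          have := mul_le_mul (mul_le_mul h2 h1 (abs_nonneg _) hCS0) h3
            (abs_nonneg _) (by positivity)
          exact this
      _ = (n : ℝ) * ((n : ℝ) * (CS * M * CP)) := by
          simp [Finset.sum_const]
          try ring
  -- packaged bounds: quadratic form + γ
  have hKpack : ∀ T > (0:ℝ), ∃ K, 0 ≤ K ∧
      (∀ t ∈ Set.Icc (0:ℝ) T, ∀ y : Fin (n-1) → ℝ,
        |y ⬝ᵥ (Dh t).mulVec y| ≤ K * (y ⬝ᵥ y)) ∧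
      (∀ t ∈ Set.Icc (0:ℝ) T, |γ t| ≤ K) := by
    intro T hT
    obtain ⟨M, hM0, hM⟩ := hDhloc T hT
    set B : ℝ := ((n-1 : ℕ) : ℝ) * ((n-1 : ℕ) : ℝ) * M with hB
    have hB0 : 0 ≤ B := by positivity
    have hq : ∀ t ∈ Set.Icc (0:ℝ) T, ∀ y : Fin (n-1) → ℝ,
        |y ⬝ᵥ (Dh t).mulVec y| ≤ B * (y ⬝ᵥ y) := by
      intro t ht y
      exact quad_bound (Dh t) M hM0 (hM t ht) y
    refine ⟨B, hB0, hq, ?_⟩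
    intro t ht
    have hub : γ t ≤ B := by
      apply (hγ t).2
      rintro r ⟨y, hy1, rfl⟩
      have := hq t ht y
      rw [hy1, mul_one] at this
      exact le_trans (le_abs_self _) this
    set y₀ : Fin (n-1) → ℝ := Pi.single (⟨0, by omega⟩ : Fin (n-1)) 1 with hy₀
    have hy₀1 : y₀ ⬝ᵥ y₀ = 1 := by
      simp [hy₀, dotProduct, Pi.single_apply]
    have hmem : y₀ ⬝ᵥ (Dh t).mulVec y₀ ≤ γ t := (hγ t).1 ⟨y₀, hy₀1, rfl⟩
    have hq0 := hq t ht y₀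
    rw [hy₀1, mul_one] at hq0
    rw [abs_le]
    constructor
    · have := neg_abs_le (y₀ ⬝ᵥ (Dh t).mulVec y₀)
      linarith
    · exact hub
  -- measurability of γ
  have hγmeas : Measurable γ := by
    set Sph : Set (Fin (n-1) → ℝ) := {y | y ⬝ᵥ y = 1} with hSphdef
    have hy₀m : (Pi.single (⟨0, by omega⟩ : Fin (n-1)) (1:ℝ)) ∈ Sph := by
      simp [hSphdef, dotProduct, Pi.single_apply]
    haveI : Nonempty ↥Sph := ⟨⟨_, hy₀m⟩⟩
    obtain ⟨s, hsc, hsd⟩ := TopologicalSpace.exists_countable_dense ↥Sph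
    obtain ⟨u, hu⟩ := hsc.exists_eq_range hsd.nonempty
    have hu1 : ∀ k, ((u k : Fin (n-1) → ℝ)) ⬝ᵥ ((u k : Fin (n-1) → ℝ)) = 1 :=
      fun k => (u k).2
    have hcont : ∀ t, Continuous fun y : Fin (n-1) → ℝ => y ⬝ᵥ (Dh t).mulVec y := by
      intro t
      have hre : (fun y : Fin (n-1) → ℝ => y ⬝ᵥ (Dh t).mulVec y)
          = fun y => ∑ a, y a * ∑ b, Dh t a b * y b := by
        funext y; simp [dotProduct, Matrix.mulVec]
      rw [hre]
      exact continuous_finset_sum _ fun a _ =>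
        (continuous_apply a).mul (continuous_finset_sum _ fun b _ =>
          (continuous_const.mul (continuous_apply b)))
    have hγeq : γ = fun t => ⨆ k, ((u k : Fin (n-1) → ℝ)) ⬝ᵥ (Dh t).mulVec (u k) := by
      funext t
      have hub : ∀ k, ((u k : Fin (n-1) → ℝ)) ⬝ᵥ (Dh t).mulVec (u k) ≤ γ t :=
        fun k => (hγ t).1 ⟨u k, hu1 k, rfl⟩
      have hlub : IsLUB (Set.range fun k =>
          ((u k : Fin (n-1) → ℝ)) ⬝ᵥ (Dh t).mulVec (u k)) (γ t) := by
        constructor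
        · rintro r ⟨k, rfl⟩; exact hub k
        · intro b hb
          apply (hγ t).2
          rintro r ⟨y, hy1, rfl⟩
          have hymem : (⟨y, hy1⟩ : ↥Sph) ∈ closure s := hsd _
          have hseq : ∀ m : ℕ, ∃ k, dist ((u k : Fin (n-1) → ℝ)) y < 1/(m+1) := by
            intro m
            obtain ⟨p, hps, hpd⟩ := Metric.mem_closure_iff.mp hymem (1/(m+1))
              (by positivity)
            rw [hu] at hps
            obtain ⟨k, rfl⟩ := hps
            refine ⟨k, ?_⟩
            rw [Subtype.dist_eq] at hpd
            rw [dist_comm]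
            exact hpd
          choose kf hkf using hseq
          have htend : Tendsto (fun m => ((u (kf m) : Fin (n-1) → ℝ))) atTop (nhds y) := by
            rw [tendsto_iff_dist_tendsto_zero]
            apply squeeze_zero (fun m => dist_nonneg) (fun m => (hkf m).le)
            exact tendsto_one_div_add_atTop_nhds_zero_nat
          have hqt : Tendsto (fun m => ((u (kf m) : Fin (n-1) → ℝ)) ⬝ᵥ
              (Dh t).mulVec (u (kf m))) atTop (nhds (y ⬝ᵥ (Dh t).mulVec y)) := by
            have := ((hcont t).tendsto y).comp htend
            exact this
          exact le_of_tendsto hqt (Eventually.of_forall fun m => hb ⟨kf m, rfl⟩)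
      exact (hlub.ciSup_eq).symm
    rw [hγeq]
    apply Measurable.iSup
    intro k
    have hre : (fun t => ((u k : Fin (n-1) → ℝ)) ⬝ᵥ (Dh t).mulVec (u k))
        = fun t => ∑ a, (u k : Fin (n-1) → ℝ) a * ∑ b, Dh t a b * (u k : Fin (n-1) → ℝ) b := by
      funext t; simp [dotProduct, Matrix.mulVec]
    rw [hre]
    exact Finset.measurable_sum _ fun a _ =>
      ((Finset.measurable_sum _ fun b _ => ((hDhmeas a b).mul_const _)).const_mul _)
  -- interval integrability of γ
  have hγint : ∀ t : ℝ, 0 ≤ t → IntervalIntegrable γ volume 0 t := by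
    intro t ht
    obtain ⟨K, hK0, _, hKγ⟩ := hKpack (t+1) (by linarith)
    apply intervalIntegrable_of_bound γ 0 t K hγmeas
    intro s hs
    rw [Set.uIcc_of_le ht] at hs
    exact hKγ s ⟨hs.1, by linarith [hs.2]⟩
  -- pointwise key inequality
  have hkey : ∀ t, z t ⬝ᵥ (Dh t).mulVec (z t) ≤ γ t * W t := by
    intro t
    rcases eq_or_lt_of_le (hWnn t) with h0 | hpos
    · have hz0 : z t = 0 := dotProduct_self_eq_zero.mp h0.symm
      rw [show W t = z t ⬝ᵥ z t from rfl, hz0]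
      simp
    · set sq := Real.sqrt (W t) with hsq
      have hsp : 0 < sq := Real.sqrt_pos.mpr hpos
      have hss : sq * sq = W t := Real.mul_self_sqrt (le_of_lt hpos)
      set y : Fin (n-1) → ℝ := sq⁻¹ • z t with hy
      have hyy : y ⬝ᵥ y = 1 := by
        rw [hy, smul_dotProduct, dotProduct_smul, smul_eq_mul,
          smul_eq_mul, show z t ⬝ᵥ z t = W t from rfl]
        field_simp [hsp.ne']
        nlinarith [hss]
      have hle : y ⬝ᵥ (Dh t).mulVec y ≤ γ t := (hγ t).1 ⟨y, hyy, rfl⟩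
      have hcalc : y ⬝ᵥ (Dh t).mulVec y
          = sq⁻¹ * (sq⁻¹ * (z t ⬝ᵥ (Dh t).mulVec (z t))) := by
        rw [hy, Matrix.mulVec_smul, smul_dotProduct, dotProduct_smul,
          smul_eq_mul, smul_eq_mul]
      have hWt : W t = sq * sq := hss.symm
      calc z t ⬝ᵥ (Dh t).mulVec (z t)
          = (sq * sq) * (y ⬝ᵥ (Dh t).mulVec y) := by
            rw [hcalc]; field_simp
        _ ≤ (sq * sq) * γ t := by
            apply mul_le_mul_of_nonneg_left hle (by positivity)
        _ = γ t * W t := by rw [← hss]; ring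
  -- measurability of the quadratic form along the solution
  have hqmeas : Measurable fun s => z s ⬝ᵥ (Dh s).mulVec (z s) := by
    have hre : (fun s => z s ⬝ᵥ (Dh s).mulVec (z s))
        = fun s => ∑ a, z s a * ∑ b, Dh s a b * z s b := by
      funext s; simp [dotProduct, Matrix.mulVec]
    rw [hre]
    exact Finset.measurable_sum _ fun a _ =>
      ((hzc a).measurable.mul (Finset.measurable_sum _ fun b _ =>
        ((hDhmeas a b).mul (hzc b).measurable)))
  -- W tends to 0
  have hWtend : Tendsto W atTop (nhds 0) := by
    rcases eq_or_lt_of_le (hWnn 0) with hW00 | hW0pos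
    · -- W 0 = 0 : then W vanishes for all t ≥ 0
      have hWzero : ∀ t, 0 ≤ t → W t = 0 := by
        intro t ht
        rcases eq_or_lt_of_le ht with rfl | htp
        · exact hW00.symm
        obtain ⟨K, hK0, hKq, _⟩ := hKpack t htp
        set U : ℝ → ℝ := fun r => W r * Real.exp (-(2*K) * r) with hU
        have hU' : ∀ r, HasDerivAt U
            (2 * (z r ⬝ᵥ (Dh r).mulVec (z r)) * Real.exp (-(2*K) * r)
              + W r * (Real.exp (-(2*K) * r) * (-(2*K)))) r := by
          intro r
          have hexp : HasDerivAt (fun s : ℝ => Real.exp (-(2*K) * s))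
              (Real.exp (-(2*K) * r) * (-(2*K))) r := by
            simpa using ((hasDerivAt_id r).const_mul (-(2*K))).exp
          exact (hW' r).mul hexp
        have hanti : AntitoneOn U (Set.Icc 0 t) := by
          apply antitoneOn_of_deriv_nonpos (convex_Icc 0 t)
          · exact (hWc.mul (Real.continuous_exp.comp (continuous_const.mul continuous_id))).continuousOn
          · intro r _
            exact ((hU' r).differentiableAt).differentiableWithinAt
          · intro r hr
            rw [interior_Icc] at hr
            rw [(hU' r).deriv]
            have hb := hKq r ⟨hr.1.le, hr.2.le⟩ (z r)
            rw [show z r ⬝ᵥ z r = W r from rfl] at hb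
            have he : 0 < Real.exp (-(2*K) * r) := Real.exp_pos _
            have h1 : z r ⬝ᵥ (Dh r).mulVec (z r) ≤ K * W r := le_trans (le_abs_self _) hb
            nlinarith [hWnn r]
        have hUt : U t ≤ U 0 := hanti ⟨le_refl 0, ht⟩ ⟨ht, le_refl t⟩ ht
        simp only [hU, mul_zero, neg_zero, Real.exp_zero, mul_one] at hUt
        rw [← hW00] at hUt
        have he : 0 < Real.exp (-(2*K) * t) := Real.exp_pos _
        exact le_antisymm (by nlinarith [hWnn t]) (hWnn t)
      have : ∀ᶠ t in atTop, W t = 0 := by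
        filter_upwards [eventually_ge_atTop (0:ℝ)] with t ht using hWzero t ht
      exact Tendsto.congr' (this.mono fun t h => h.symm) tendsto_const_nhds
    · -- W 0 > 0 : positivity propagates, use the log estimate
      have hWpos : ∀ t, 0 ≤ t → 0 < W t := by
        intro t ht
        rcases eq_or_lt_of_le ht with rfl | htp
        · exact hW0pos
        obtain ⟨K, hK0, hKq, _⟩ := hKpack t htp
        set V : ℝ → ℝ := fun r => W r * Real.exp ((2*K) * r) with hV
        have hV' : ∀ r, HasDerivAt V
            (2 * (z r ⬝ᵥ (Dh r).mulVec (z r)) * Real.exp ((2*K) * r)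
              + W r * (Real.exp ((2*K) * r) * (2*K))) r := by
          intro r
          have hexp : HasDerivAt (fun s : ℝ => Real.exp ((2*K) * s))
              (Real.exp ((2*K) * r) * (2*K)) r := by
            simpa using ((hasDerivAt_id r).const_mul (2*K)).exp
          exact (hW' r).mul hexp
        have hmono : MonotoneOn V (Set.Icc 0 t) := by
          apply monotoneOn_of_deriv_nonneg (convex_Icc 0 t)
          · exact (hWc.mul (Real.continuous_exp.comp (continuous_const.mul continuous_id))).continuousOn
          · intro r _
            exact ((hV' r).differentiableAt).differentiableWithinAt
          · intro r hr
            rw [interior_Icc] at hr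
            rw [(hV' r).deriv]
            have hb := hKq r ⟨hr.1.le, hr.2.le⟩ (z r)
            rw [show z r ⬝ᵥ z r = W r from rfl] at hb
            have he : 0 < Real.exp ((2*K) * r) := Real.exp_pos _
            have h1 : -(K * W r) ≤ z r ⬝ᵥ (Dh r).mulVec (z r) := by
              have := neg_abs_le (z r ⬝ᵥ (Dh r).mulVec (z r))
              linarith
            nlinarith [hWnn r]
        have hVt : V 0 ≤ V t := hmono ⟨le_refl 0, ht⟩ ⟨ht, le_refl t⟩ ht
        simp only [hV, mul_zero, Real.exp_zero, mul_one] at hVt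
        have he : 0 < Real.exp ((2*K) * t) := Real.exp_pos _
        nlinarith
      -- the main exponential estimate
      have hWle : ∀ t, 0 < t → W t ≤ W 0 * Real.exp (2 * ∫ u in (0:ℝ)..t, γ u) := by
        intro t ht
        obtain ⟨K, hK0, hKq, hKγ⟩ := hKpack t ht
        have hL' : ∀ s ∈ Set.uIcc (0:ℝ) t, HasDerivAt (fun r => Real.log (W r))
            (2 * (z s ⬝ᵥ (Dh s).mulVec (z s)) / W s) s := by
          intro s hs
          rw [Set.uIcc_of_le ht.le] at hs
          exact (hW' s).log (ne_of_gt (hWpos s hs.1))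
        have hint : IntervalIntegrable
            (fun s => 2 * (z s ⬝ᵥ (Dh s).mulVec (z s)) / W s) volume 0 t := by
          apply intervalIntegrable_of_bound _ _ _ (2*K)
          · exact (hqmeas.const_mul 2).div hWc.measurable
          · intro s hs
            rw [Set.uIcc_of_le ht.le] at hs
            have hWp := hWpos s hs.1
            have hb := hKq s hs (z s)
            rw [show z s ⬝ᵥ z s = W s from rfl] at hb
            rw [abs_div, abs_of_pos hWp, div_le_iff₀ hWp, abs_mul]
            have : |(2:ℝ)| = 2 := by norm_num
            rw [this]
            nlinarith
        have hftc := intervalIntegral.integral_eq_sub_of_hasDerivAt hL' hint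
        have h2γint : IntervalIntegrable (fun s => 2 * γ s) volume 0 t :=
          (hγint t ht.le).const_mul 2
        have hmono2 : ∫ s in (0:ℝ)..t, 2 * (z s ⬝ᵥ (Dh s).mulVec (z s)) / W s
            ≤ ∫ s in (0:ℝ)..t, 2 * γ s := by
          apply intervalIntegral.integral_mono_on ht.le hint h2γint
          intro s hs
          have hWp := hWpos s hs.1
          rw [div_le_iff₀ hWp]
          have := hkey s
          nlinarith
        have h2γ : ∫ s in (0:ℝ)..t, 2 * γ s = 2 * ∫ u in (0:ℝ)..t, γ u :=
          intervalIntegral.integral_const_mul 2 γ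
        have hlog : Real.log (W t) ≤ Real.log (W 0) + 2 * ∫ u in (0:ℝ)..t, γ u := by
          have h1 : Real.log (W t) - Real.log (W 0) ≤ ∫ s in (0:ℝ)..t, 2 * γ s := by
            rw [← hftc]; exact hmono2
          rw [h2γ] at h1
          linarith
        calc W t = Real.exp (Real.log (W t)) :=
              (Real.exp_log (hWpos t ht.le)).symm
          _ ≤ Real.exp (Real.log (W 0) + 2 * ∫ u in (0:ℝ)..t, γ u) :=
              Real.exp_le_exp.mpr hlog
          _ = W 0 * Real.exp (2 * ∫ u in (0:ℝ)..t, γ u) := by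
              rw [Real.exp_add, Real.exp_log hW0pos]
      -- asymptotic decay from the limsup hypothesis
      set f : ℝ → ℝ := fun t => t⁻¹ * ∫ u in (0:ℝ)..t, γ u with hfdef
      set L : ℝ := limsup f atTop with hLdef
      have hL0 : L < 0 := hdiss
      have hbd : IsBoundedUnder (· ≤ ·) atTop f := by
        by_contra hnb
        have hempty : {a : ℝ | ∀ᶠ tt in atTop, f tt ≤ a} = ∅ := by
          ext a
          simp only [Set.mem_setOf_eq, Set.mem_empty_iff_false, iff_false]
          intro ha
          exact hnb ⟨a, eventually_map.mpr ha⟩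
        have : limsup f atTop = 0 := by
          rw [limsup_eq, hempty, Real.sInf_empty]
        rw [← hLdef] at this
        rw [this] at hL0
        exact lt_irrefl 0 hL0
      have hev : ∀ᶠ t in atTop, f t < L/2 :=
        eventually_lt_of_limsup_lt (by rw [← hLdef]; linarith) hbd
      have hup : ∀ᶠ t in atTop, W t ≤ W 0 * Real.exp (L * t) := by
        filter_upwards [hev, eventually_gt_atTop (0:ℝ)] with t hft htp
        have h2 : ∫ u in (0:ℝ)..t, γ u ≤ L/2 * t := by
          simp only [hfdef, inv_mul_eq_div] at hft
          exact ((div_lt_iff₀ htp).mp hft).le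
        calc W t ≤ W 0 * Real.exp (2 * ∫ u in (0:ℝ)..t, γ u) := hWle t htp
          _ ≤ W 0 * Real.exp (L * t) := by
              apply mul_le_mul_of_nonneg_left _ hW0pos.le
              apply Real.exp_le_exp.mpr
              nlinarith
      have hexp0 : Tendsto (fun t => W 0 * Real.exp (L * t)) atTop (nhds 0) := by
        have h1 : Tendsto (fun t : ℝ => L * t) atTop atBot := by
          have := (tendsto_const_mul_atBot_of_neg hL0).mpr (tendsto_id (α := ℝ))
          simpa using this
        have h2 : Tendsto (fun t : ℝ => Real.exp (L * t)) atTop (nhds 0) :=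
          Real.tendsto_exp_atBot.comp h1
        have := h2.const_mul (W 0)
        simpa using this
      apply tendsto_of_tendsto_of_tendsto_of_le_of_le' tendsto_const_nhds hexp0
      · exact Eventually.of_forall hWnn
      · exact hup
  -- coordinates of z tend to 0
  have hztend : ∀ a, Tendsto (fun t => z t a) atTop (nhds 0) := by
    intro a
    have hsq : Tendsto (fun t => Real.sqrt (W t)) atTop (nhds 0) := by
      have := (Real.continuous_sqrt.tendsto 0).comp hWtend
      simpa [Function.comp_def] using this
    have habs : ∀ t, |z t a| ≤ Real.sqrt (W t) := by
      intro t
      rw [← Real.sqrt_sq_eq_abs]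
      apply Real.sqrt_le_sqrt
      have h1 := Finset.single_le_sum (f := fun b => z t b * z t b)
        (fun b _ => mul_self_nonneg _) (Finset.mem_univ a)
      calc z t a ^ 2 = z t a * z t a := pow_two (z t a)
        _ ≤ ∑ b, z t b * z t b := h1
        _ = W t := rfl
    exact tendsto_of_tendsto_of_tendsto_of_le_of_le (by simpa using hsq.neg) hsq
      (fun t => (abs_le.mp (habs t)).1) (fun t => (abs_le.mp (habs t)).2)
  -- conclude
  have hfinal : ∀ t, x t i - x t j = ∑ a, (P i a - P j a) * z t a := by
    intro t
    obtain ⟨c, hc⟩ := hdecomp (x t)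
    have hxi : x t i = P.mulVec (z t) i + c := by
      conv_lhs => rw [hc]
      rfl
    have hxj : x t j = P.mulVec (z t) j + c := by
      conv_lhs => rw [hc]
      rfl
    rw [hxi, hxj]
    simp only [Matrix.mulVec, dotProduct, sub_mul, Finset.sum_sub_distrib]
    ring
  have htends : Tendsto (fun t => ∑ a, (P i a - P j a) * z t a) atTop (nhds 0) := by
    have := tendsto_finset_sum (Finset.univ : Finset (Fin (n-1)))
      (fun a _ => (hztend a).const_mul (P i a - P j a))
    simpa using this
  exact htends.congr fun t => (hfinal t).symm
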